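/- Let μ ≠ 0 and 0 ≤ ρ ≤ 4μ². The function g(x) := x²·(μ² + ρ(1 − log x)²) is strictly increasing on (0,∞), tends to 0 as x → 0⁺ and to +∞ as x → ∞. Consequently, for every d > 0 there is a unique x₀ > 0 with g(x₀) = d, i.e. each orbit F(x,y) = d of the phase-plane system intersects the x-axis at exactly one point. -/

import Mathlib

open Real Filter Set

/-- `g(x) = F(x,0) = x²(μ² + ρ(1 − log x)²)`, where `F` is the first integral of the
phase-plane system associated to the curvature energy `Θ_μ` in the 2-space form of
curvature `ρ`. -/
noncomputable def gfun (μ ρ x : ℝ) : ℝ :=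
  x ^ 2 * (μ ^ 2 + ρ * (1 - Real.log x) ^ 2)

lemma gfun_hasDerivAt (μ ρ : ℝ) {x : ℝ} (hx : 0 < x) :
    HasDerivAt (gfun μ ρ)
      (2 * x * (μ ^ 2 + ρ * ((1 - Real.log x) ^ 2 - (1 - Real.log x)))) x := by
  have hlog : HasDerivAt Real.log x⁻¹ x := Real.hasDerivAt_log hx.ne'
  have h1 : HasDerivAt (fun y => 1 - Real.log y) (-x⁻¹) x := by
    exact ((hasDerivAt_const x (1 : ℝ)).sub hlog).congr_deriv (by ring)
  have h2 := h1.pow 2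
  have h3 := ((hasDerivAt_const x (μ ^ 2)).add (h2.const_mul ρ))
  have h4 : HasDerivAt (fun y : ℝ => y ^ 2) (2 * x ^ 1) x := hasDerivAt_pow 2 x
  have h5 := h4.mul h3
  refine h5.congr_deriv ?_
  simp only [Pi.add_apply, Pi.pow_apply]
  field_simp
  ring

lemma gfun_deriv_pos (μ ρ : ℝ) (hμ : μ ≠ 0) (hρ0 : 0 ≤ ρ) (hρ4 : ρ ≤ 4 * μ ^ 2)
    {x : ℝ} (hx : 0 < x) (hxc : x ≠ Real.exp (1 / 2)) :
    0 < 2 * x * (μ ^ 2 + ρ * ((1 - Real.log x) ^ 2 - (1 - Real.log x))) := by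
  set t := 1 - Real.log x with ht
  clear_value t
  have htne : t ≠ 1 / 2 := by
    intro h
    apply hxc
    have : Real.log x = 1 / 2 := by rw [ht] at h; linarith
    rw [← Real.exp_log hx, this]
  have hμ2 : 0 < μ ^ 2 := by positivity
  have hsq : 0 < (t - 1 / 2) ^ 2 := by
    have : t - 1 / 2 ≠ 0 := sub_ne_zero.mpr htne
    positivity
  have key : 0 < μ ^ 2 + ρ * (t ^ 2 - t) := by
    rcases eq_or_lt_of_le hρ4 with h | h
    · have hρpos : 0 < ρ := by rw [h]; positivity
      nlinarith [mul_pos hρpos hsq]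
    · nlinarith [mul_nonneg hρ0 hsq.le]
  positivity

theorem orbit_meets_axis_once (μ ρ : ℝ) (hμ : μ ≠ 0) (hρ0 : 0 ≤ ρ) (hρ4 : ρ ≤ 4 * μ ^ 2) :
    StrictMonoOn (gfun μ ρ) (Set.Ioi 0) ∧
    Filter.Tendsto (gfun μ ρ) (nhdsWithin 0 (Set.Ioi 0)) (nhds 0) ∧
    Filter.Tendsto (gfun μ ρ) Filter.atTop Filter.atTop ∧
    ∀ d : ℝ, 0 < d → ∃! x : ℝ, 0 < x ∧ gfun μ ρ x = d := by
  set c := Real.exp (1 / 2) with hc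
  have hc0 : 0 < c := Real.exp_pos _
  have hcont : ∀ s : Set ℝ, s ⊆ Set.Ioi 0 → ContinuousOn (gfun μ ρ) s := by
    intro s hs
    apply ContinuousOn.mul ((continuous_pow 2).continuousOn)
    apply ContinuousOn.add continuousOn_const
    apply ContinuousOn.mul continuousOn_const
    apply ContinuousOn.pow
    exact continuousOn_const.sub (Real.continuousOn_log.mono fun x hx => ne_of_gt (hs hx))
  have hderiv : ∀ x : ℝ, 0 < x → x ≠ c → 0 < deriv (gfun μ ρ) x := by
    intro x hx hxc
    rw [(gfun_hasDerivAt μ ρ hx).deriv]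
    exact gfun_deriv_pos μ ρ hμ hρ0 hρ4 hx hxc
  -- strict monotonicity on the two pieces
  have SM1 : StrictMonoOn (gfun μ ρ) (Set.Ioc 0 c) := by
    apply strictMonoOn_of_deriv_pos (convex_Ioc 0 c) (hcont _ Ioc_subset_Ioi_self)
    intro x hx
    rw [interior_Ioc] at hx
    exact hderiv x hx.1 (ne_of_lt hx.2)
  have SM2 : StrictMonoOn (gfun μ ρ) (Set.Ici c) := by
    apply strictMonoOn_of_deriv_pos (convex_Ici c)
      (hcont _ fun x hx => lt_of_lt_of_le hc0 hx)
    intro x hx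
    rw [interior_Ici] at hx
    exact hderiv x (hc0.trans hx) (ne_of_gt hx)
  have SM : StrictMonoOn (gfun μ ρ) (Set.Ioi 0) := by
    intro x hx y hy hxy
    rcases le_or_gt y c with hyc | hyc
    · exact SM1 ⟨hx, (hxy.le.trans hyc)⟩ ⟨hy, hyc⟩ hxy
    · rcases le_or_gt c x with hcx | hcx
      · exact SM2 hcx (hcx.trans hxy.le) hxy
      · exact (SM1 ⟨hx, hcx.le⟩ ⟨hc0, le_refl c⟩ hcx).trans
          (SM2 (le_refl c) hyc.le hyc)
  -- rewrite gfun in a convenient form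
  have hg : ∀ x : ℝ, gfun μ ρ x = μ ^ 2 * x ^ 2 + ρ * (x - Real.log x * x) ^ 2 := by
    intro x; simp only [gfun]; ring
  -- limit at 0⁺
  have Tlogx : Filter.Tendsto (fun x : ℝ => Real.log x * x) (nhdsWithin 0 (Set.Ioi 0))
      (nhds 0) := by
    have := tendsto_log_mul_rpow_nhdsGT_zero (one_pos)
    simpa [Real.rpow_one] using this
  have Tid : Filter.Tendsto (fun x : ℝ => x) (nhdsWithin 0 (Set.Ioi 0)) (nhds 0) :=
    tendsto_id.mono_left nhdsWithin_le_nhds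
  have T0 : Filter.Tendsto (gfun μ ρ) (nhdsWithin 0 (Set.Ioi 0)) (nhds 0) := by
    have h := (((Tid.pow 2).const_mul (μ ^ 2)).add
      (((Tid.sub Tlogx).pow 2).const_mul ρ))
    simp only [funext hg]
    convert h using 2 <;> ring_nf <;> simp
  -- limit at ∞
  have Ttop : Filter.Tendsto (gfun μ ρ) Filter.atTop Filter.atTop := by
    have hbase : Filter.Tendsto (fun x : ℝ => μ ^ 2 * x ^ 2) Filter.atTop Filter.atTop := by
      have hμ2 : 0 < μ ^ 2 := by positivity
      exact (tendsto_pow_atTop two_ne_zero).const_mul_atTop hμ2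
    apply Filter.tendsto_atTop_mono _ hbase
    intro x
    rw [hg]
    nlinarith [mul_nonneg hρ0 (sq_nonneg (x - Real.log x * x))]
  refine ⟨SM, T0, Ttop, ?_⟩
  intro d hd
  -- get a point below
  have hA : ∃ a : ℝ, 0 < a ∧ gfun μ ρ a < d := by
    have h1 : ∀ᶠ x in nhdsWithin 0 (Set.Ioi 0), gfun μ ρ x < d :=
      T0.eventually_lt_const hd
    obtain ⟨a, ha1, ha2⟩ := (h1.and eventually_mem_nhdsWithin).exists
    exact ⟨a, ha2, ha1⟩
  obtain ⟨a, ha0, had⟩ := hA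
  have hB : ∃ b : ℝ, a ≤ b ∧ d < gfun μ ρ b := by
    obtain ⟨b, hb1, hb2⟩ := ((Ttop.eventually_gt_atTop d).and (eventually_ge_atTop a)).exists
    exact ⟨b, hb2, hb1⟩
  obtain ⟨b, hab, hbd⟩ := hB
  have hsub : Set.Icc a b ⊆ Set.Ioi 0 := fun x hx => lt_of_lt_of_le ha0 hx.1
  have hIVT := intermediate_value_Icc hab (hcont _ hsub)
  have hdmem : d ∈ Set.Icc (gfun μ ρ a) (gfun μ ρ b) := ⟨had.le, hbd.le⟩
  obtain ⟨x, hxmem, hxd⟩ := hIVT hdmem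
  refine ⟨x, ⟨hsub hxmem, hxd⟩, ?_⟩
  intro y ⟨hy0, hyd⟩
  exact SM.injOn hy0 (hsub hxmem) (by rw [hyd, hxd])
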